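/- The two-outcome noisy Pauli POVMs M^η_{±|x} = η·Π_{±|x} + (1−η)·I/2 and M^η_{±|y} = η·Π_{±|y} + (1−η)·I/2, where Π_{±|x} and Π_{±|y} are the spectral projections of σ_x and σ_y, are jointly measurable if and only if η ≤ 1/√2. -/

import Mathlib

open Matrix Kronecker Complex
open scoped ComplexOrder

noncomputable section

def σx : Matrix (Fin 2) (Fin 2) ℂ := !![0, 1; 1, 0]
def σy : Matrix (Fin 2) (Fin 2) ℂ := !![0, -I; I, 0]

/-- Sign of an outcome labeled by `Fin 2`. -/
def sgn (a : Fin 2) : ℝ := if a = 0 then 1 else -1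

/-- Spectral projections of `σx`: `Π_{±|x} = (I ± σx)/2`. -/
def Px (a : Fin 2) : Matrix (Fin 2) (Fin 2) ℂ := (1/2 : ℝ) • (1 + sgn a • σx)

/-- Spectral projections of `σy`: `Π_{±|y} = (I ± σy)/2`. -/
def Py (a : Fin 2) : Matrix (Fin 2) (Fin 2) ℂ := (1/2 : ℝ) • (1 + sgn a • σy)

/-- Noisy POVM element `η Π + (1-η) I/2`. -/
def noisy (η : ℝ) (Pm : Matrix (Fin 2) (Fin 2) ℂ) : Matrix (Fin 2) (Fin 2) ℂ :=
  η • Pm + ((1 - η)/2) • 1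

/-- Two two-outcome qubit POVMs are jointly measurable if there is a four-outcome
parent POVM whose marginals reproduce them. -/
def JointlyMeasurable (M0 M1 : Fin 2 → Matrix (Fin 2) (Fin 2) ℂ) : Prop :=
  ∃ G : Fin 2 → Fin 2 → Matrix (Fin 2) (Fin 2) ℂ,
    (∀ a b, (G a b).PosSemidef) ∧
    (∀ a, ∑ b, G a b = M0 a) ∧
    (∀ b, ∑ a, G a b = M1 b)

lemma keyineq (P Q t : ℝ) (hP : 0 ≤ P) (hQ : 0 ≤ Q) (ht : t^2 ≤ P*Q) : 0 ≤ P + Q + 2*t := by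
  nlinarith [sq_nonneg (P - Q), sq_nonneg (P + Q + 2*t)]

lemma psd_aux (c d : ℝ) (h : c^2 + d^2 ≤ 1) :
    (!![(1:ℂ), c - d*I; (c:ℂ) + d*I, 1]).PosSemidef := by
  rw [posSemidef_iff_dotProduct_mulVec]
  constructor
  · ext i j
    fin_cases i <;> fin_cases j <;>
      simp [Matrix.conjTranspose_apply, Complex.ext_iff]
  · intro x
    have hx : star x ⬝ᵥ ((!![(1:ℂ), c - d*I; (c:ℂ) + d*I, 1]) *ᵥ x) =
        (starRingEnd ℂ) (x 0) * (x 0 + ((c:ℂ) - d*I) * x 1)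
          + (starRingEnd ℂ) (x 1) * (((c:ℂ) + d*I) * x 0 + x 1) := by
      simp [dotProduct, mulVec, Fin.sum_univ_two]
    rw [hx, Complex.le_def]
    set p0 := (x 0).re; set q0 := (x 0).im; set p1 := (x 1).re; set q1 := (x 1).im
    constructor
    · have key : 0 ≤ (p0^2+q0^2) + (p1^2+q1^2) +
          2*(c*(p0*p1+q0*q1) + d*(p0*q1-q0*p1)) := by
        apply keyineq _ _ _ (by positivity) (by positivity)
        nlinarith [sq_nonneg (c*(p0*q1-q0*p1) - d*(p0*p1+q0*q1)),
          mul_nonneg (sub_nonneg.2 h) (mul_nonneg (by positivity : (0:ℝ) ≤ p0^2+q0^2)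
            (by positivity : (0:ℝ) ≤ p1^2+q1^2))]
      simp only [Complex.zero_re, Complex.add_re, Complex.mul_re, Complex.mul_im, Complex.add_im,
        Complex.sub_re, Complex.sub_im, Complex.ofReal_re, Complex.ofReal_im,
        Complex.I_re, Complex.I_im, Complex.conj_re, Complex.conj_im]
      nlinarith [key]
    · simp only [Complex.zero_im, Complex.add_re, Complex.mul_re, Complex.mul_im, Complex.add_im,
        Complex.sub_re, Complex.sub_im, Complex.ofReal_re, Complex.ofReal_im,
        Complex.I_re, Complex.I_im, Complex.conj_re, Complex.conj_im]
      ring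

lemma psd_smul (r : ℝ) (hr : 0 ≤ r) {M : Matrix (Fin 2) (Fin 2) ℂ} (h : M.PosSemidef) :
    (r • M).PosSemidef := by
  rw [posSemidef_iff_dotProduct_mulVec]
  refine ⟨?_, fun x => ?_⟩
  · unfold Matrix.IsHermitian
    rw [conjTranspose_smul, h.1, star_trivial]
  · rw [smul_mulVec, dotProduct_smul]
    exact smul_nonneg hr (h.dotProduct_mulVec_nonneg x)

def qf (x : Fin 2 → ℂ) (M : Matrix (Fin 2) (Fin 2) ℂ) : ℝ := (star x ⬝ᵥ (M *ᵥ x)).re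

lemma qf_add (x : Fin 2 → ℂ) (A B : Matrix (Fin 2) (Fin 2) ℂ) :
    qf x (A + B) = qf x A + qf x B := by
  simp only [qf, add_mulVec, dotProduct_add, Complex.add_re]

lemma qf_nonneg {M : Matrix (Fin 2) (Fin 2) ℂ} (h : M.PosSemidef) (x : Fin 2 → ℂ) :
    0 ≤ qf x M := by
  have := h.dotProduct_mulVec_nonneg x
  rw [Complex.le_def] at this
  simpa [qf] using this.1

lemma qf_pair1 (s : ℝ) (M : Matrix (Fin 2) (Fin 2) ℂ) :
    qf ![(s:ℂ), 1+I] M + qf ![(s:ℂ), -(1+I)] M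
      = 2*(s*s)*(M 0 0).re + 4*(M 1 1).re := by
  simp [qf, dotProduct, mulVec, Fin.sum_univ_two, Complex.add_re, Complex.mul_re,
    Complex.mul_im, Complex.add_im, Complex.neg_re, Complex.neg_im, Complex.conj_re,
    Complex.conj_im]
  ring

lemma qf_pair2 (s : ℝ) (M : Matrix (Fin 2) (Fin 2) ℂ) :
    qf ![(s:ℂ), 1-I] M + qf ![(s:ℂ), -(1-I)] M
      = 2*(s*s)*(M 0 0).re + 4*(M 1 1).re := by
  simp [qf, dotProduct, mulVec, Fin.sum_univ_two, Complex.add_re, Complex.mul_re,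
    Complex.mul_im, Complex.add_im, Complex.neg_re, Complex.neg_im, Complex.conj_re,
    Complex.conj_im, Complex.sub_re, Complex.sub_im]
  ring

lemma qf_val_x1_Px0 (η s : ℝ) (hs : s * s = 2) :
    qf ![(s:ℂ), 1+I] (noisy η (Px 0)) = 2 + η*s := by
  simp [qf, noisy, Px, σx, sgn, dotProduct, mulVec, Fin.sum_univ_two, Matrix.one_apply,
    Complex.add_re, Complex.mul_re, Complex.mul_im, Complex.add_im, Complex.conj_re,
    Complex.conj_im]
  linear_combination (1/2) * hs

lemma qf_val_x1_Px1 (η s : ℝ) (hs : s * s = 2) :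
    qf ![(s:ℂ), 1+I] (noisy η (Px 1)) = 2 - η*s := by
  simp [qf, noisy, Px, σx, sgn, dotProduct, mulVec, Fin.sum_univ_two, Matrix.one_apply,
    Complex.add_re, Complex.mul_re, Complex.mul_im, Complex.add_im, Complex.conj_re,
    Complex.conj_im]
  linear_combination (1/2) * hs

lemma qf_val_x1_Py0 (η s : ℝ) (hs : s * s = 2) :
    qf ![(s:ℂ), 1+I] (noisy η (Py 0)) = 2 + η*s := by
  simp [qf, noisy, Py, σy, sgn, dotProduct, mulVec, Fin.sum_univ_two, Matrix.one_apply,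
    Complex.add_re, Complex.mul_re, Complex.mul_im, Complex.add_im, Complex.conj_re,
    Complex.conj_im]
  linear_combination (1/2) * hs

lemma qf_val_x2_Px0 (η s : ℝ) (hs : s * s = 2) :
    qf ![(s:ℂ), 1-I] (noisy η (Px 0)) = 2 + η*s := by
  simp [qf, noisy, Px, σx, sgn, dotProduct, mulVec, Fin.sum_univ_two, Matrix.one_apply,
    Complex.add_re, Complex.mul_re, Complex.mul_im, Complex.add_im, Complex.conj_re,
    Complex.conj_im, Complex.sub_re, Complex.sub_im]
  linear_combination (1/2) * hs

lemma qf_val_x2_Py0 (η s : ℝ) (hs : s * s = 2) :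
    qf ![(s:ℂ), 1-I] (noisy η (Py 0)) = 2 - η*s := by
  simp [qf, noisy, Py, σy, sgn, dotProduct, mulVec, Fin.sum_univ_two, Matrix.one_apply,
    Complex.add_re, Complex.mul_re, Complex.mul_im, Complex.add_im, Complex.conj_re,
    Complex.conj_im, Complex.sub_re, Complex.sub_im]
  linear_combination (1/2) * hs

lemma noisy_Px0_diag_re (η : ℝ) (i : Fin 2) : ((noisy η (Px 0)) i i).re = 1/2 := by
  fin_cases i <;>
    simp [noisy, Px, σx, sgn, Matrix.one_apply, Complex.add_re, Complex.real_smul,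
      Complex.mul_re] <;> ring

set_option maxHeartbeats 2000000 in
/-- The noisy Pauli-`x` and Pauli-`y` POVMs are jointly measurable iff `η ≤ 1/√2`. -/
theorem noisy_pauli_jointly_measurable_iff (η : ℝ) (hη0 : 0 ≤ η) (hη1 : η ≤ 1) :
    JointlyMeasurable (fun a => noisy η (Px a)) (fun a => noisy η (Py a)) ↔
      η ≤ 1 / Real.sqrt 2 := by
  have hs : Real.sqrt 2 * Real.sqrt 2 = 2 := Real.mul_self_sqrt (by norm_num)
  have hs0 : (0:ℝ) < Real.sqrt 2 := Real.sqrt_pos.2 (by norm_num)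
  set s : ℝ := Real.sqrt 2 with hsdef
  constructor
  · rintro ⟨G, hpsd, h0, h1⟩
    simp only [Fin.sum_univ_two] at h0 h1
    set x1 : Fin 2 → ℂ := ![(s:ℂ), 1+I] with hx1
    set x2 : Fin 2 → ℂ := ![(s:ℂ), 1-I] with hx2
    -- quadratic-form identities from the marginal conditions
    have qA1 : qf x1 (G 0 0) + qf x1 (G 0 1) = 2 + η*s := by
      rw [← qf_add, h0 0, qf_val_x1_Px0 η s hs]
    have qA2 : qf x1 (G 1 0) + qf x1 (G 1 1) = 2 - η*s := by
      rw [← qf_add, h0 1, qf_val_x1_Px1 η s hs]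
    have qA3 : qf x1 (G 0 0) + qf x1 (G 1 0) = 2 + η*s := by
      rw [← qf_add, h1 0, qf_val_x1_Py0 η s hs]
    have qB1 : qf x2 (G 0 0) + qf x2 (G 0 1) = 2 + η*s := by
      rw [← qf_add, h0 0, qf_val_x2_Px0 η s hs]
    have qB2 : qf x2 (G 0 0) + qf x2 (G 1 0) = 2 - η*s := by
      rw [← qf_add, h1 0, qf_val_x2_Py0 η s hs]
    -- positivity
    have p11 : 0 ≤ qf x1 (G 1 1) := qf_nonneg (hpsd 1 1) x1
    have p10 : 0 ≤ qf x2 (G 1 0) := qf_nonneg (hpsd 1 0) x2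
    have p00' : 0 ≤ qf ![(s:ℂ), -(1+I)] (G 0 0) := qf_nonneg (hpsd 0 0) _
    have p01' : 0 ≤ qf ![(s:ℂ), -(1-I)] (G 0 1) := qf_nonneg (hpsd 0 1) _
    -- pair identities
    have pair1 : qf x1 (G 0 0) + qf ![(s:ℂ), -(1+I)] (G 0 0)
        = 2*(s*s)*((G 0 0) 0 0).re + 4*((G 0 0) 1 1).re := qf_pair1 s (G 0 0)
    have pair2 : qf x2 (G 0 1) + qf ![(s:ℂ), -(1-I)] (G 0 1)
        = 2*(s*s)*((G 0 1) 0 0).re + 4*((G 0 1) 1 1).re := qf_pair2 s (G 0 1)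
    -- diagonal entry sums
    have ediag : ∀ i : Fin 2, ((G 0 0) i i).re + ((G 0 1) i i).re = 1/2 := by
      intro i
      have := congrArg (fun M : Matrix (Fin 2) (Fin 2) ℂ => (M i i).re) (h0 0)
      simpa [Matrix.add_apply, noisy_Px0_diag_re η i] using this
    have e0 := ediag 0
    have e1 := ediag 1
    -- combine everything
    have hfin : η * s ≤ 1 := by nlinarith [hs]
    exact (le_div_iff₀ hs0).mpr hfin
  · intro hη
    have h3 : η * s ≤ 1 := (le_div_iff₀ hs0).1 hη
    have h2 : 2 * η^2 ≤ 1 := by nlinarith [h3, hs, mul_nonneg hη0 hs0.le]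
    refine ⟨fun a b => (1/4 : ℝ) • !![(1:ℂ), (η * sgn a : ℝ) - (η * sgn b : ℝ)*I;
        ((η * sgn a : ℝ):ℂ) + (η * sgn b : ℝ)*I, 1], ?_, ?_, ?_⟩
    · intro a b
      apply psd_smul _ (by norm_num)
      apply psd_aux
      have ha : (sgn a)^2 = 1 := by unfold sgn; split <;> norm_num
      have hb : (sgn b)^2 = 1 := by unfold sgn; split <;> norm_num
      calc (η * sgn a)^2 + (η * sgn b)^2 = η^2*((sgn a)^2 + (sgn b)^2) := by ring
        _ = 2*η^2 := by rw [ha, hb]; ring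
        _ ≤ 1 := h2
    · intro a
      rw [Fin.sum_univ_two]
      fin_cases a <;>
        · ext i j
          fin_cases i <;> fin_cases j <;>
            simp [noisy, Px, σx, sgn, Matrix.one_apply, Complex.ext_iff] <;> ring
    · intro b
      rw [Fin.sum_univ_two]
      fin_cases b <;>
        · ext i j
          fin_cases i <;> fin_cases j <;>
            simp [noisy, Py, σy, sgn, Matrix.one_apply, Complex.ext_iff] <;> ring

end
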